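/- For an interpolatory mask A (A_{2j} = D δ_j) and the prediction-correction filters of the previous construction, perfect reconstruction holds: S_A D_{Ã^T} + S_B D_{B̃^T} = id, where Ã = D^{−1}δ, B has B_1 = I and B_k = 0 otherwise, and (B̃^T)_k = (−1)^{1−k} A_{1−k} D^{−1}. -/
import Mathlib


open scoped BigOperators
open Matrix

/-- Subdivision operator `(S_M c)_j = ∑_k M_{j-2k} c_k`. -/
noncomputable def subd {m : ℕ} (M : ℤ → Matrix (Fin 2 × Fin m) (Fin 2 × Fin m) ℝ)
    (c : ℤ → Fin 2 × Fin m → ℝ) : ℤ → Fin 2 × Fin m → ℝ :=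
  fun j => ∑ᶠ k : ℤ, (M (j - 2 * k)).mulVec (c k)

/-- Decomposition operator `(D_M c)_j = ∑_i M_{i-2j} c_i`. -/
noncomputable def decomp {m : ℕ} (M : ℤ → Matrix (Fin 2 × Fin m) (Fin 2 × Fin m) ℝ)
    (c : ℤ → Fin 2 × Fin m → ℝ) : ℤ → Fin 2 × Fin m → ℝ :=
  fun j => ∑ᶠ i : ℤ, (M (i - 2 * j)).mulVec (c i)

/-- The matrix `D = diag(1, 1/2) ⊗ I_m`. -/
noncomputable def Dmat (m : ℕ) : Matrix (Fin 2 × Fin m) (Fin 2 × Fin m) ℝ :=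
  Matrix.of fun p q => if p = q then (if p.1 = 0 then 1 else 1 / 2) else 0

/-- The matrix `D⁻¹ = diag(1, 2) ⊗ I_m`. -/
noncomputable def Dinv (m : ℕ) : Matrix (Fin 2 × Fin m) (Fin 2 × Fin m) ℝ :=
  Matrix.of fun p q => if p = q then (if p.1 = 0 then 1 else 2) else 0

/-- The mask `B` with symbol `zI`: `B_1 = I`, `B_k = 0` otherwise. -/
noncomputable def Bmask (m : ℕ) : ℤ → Matrix (Fin 2 × Fin m) (Fin 2 × Fin m) ℝ :=
  fun k => if k = 1 then 1 else 0

/-- The mask `At = D⁻¹ δ`. -/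
noncomputable def Amask' (m : ℕ) : ℤ → Matrix (Fin 2 × Fin m) (Fin 2 × Fin m) ℝ :=
  fun k => if k = 0 then Dinv m else 0

lemma Dmat_mul_Dinv (m : ℕ) : Dmat m * Dinv m = 1 := by
  ext p q
  simp only [Dmat, Dinv, Matrix.mul_apply, Matrix.of_apply, Matrix.one_apply,
    ite_mul, zero_mul, mul_ite, mul_zero]
  rw [Finset.sum_ite_eq' (Finset.univ) q]
  by_cases h : p = q
  · subst h
    by_cases h2 : p.1 = 0 <;> simp [h2]
  · simp [h, Ne.symm h]

lemma Dinv_transpose (m : ℕ) : (Dinv m)ᵀ = Dinv m := by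
  ext p q
  rcases eq_or_ne p q with h | h
  · subst h; rfl
  · simp [Dinv, Matrix.transpose_apply, h, Ne.symm h]

/-- Support of a sequence obtained by `F k = stuff · A (e k)` with `e` injective is finite. -/
lemma supp_fin {m : ℕ} {A : ℤ → Matrix (Fin 2 × Fin m) (Fin 2 × Fin m) ℝ}
    (hA : (Function.support A).Finite) (e : ℤ → ℤ) (he : Function.Injective e)
    (F : ℤ → Fin 2 × Fin m → ℝ) (hF : ∀ k, A (e k) = 0 → F k = 0) :
    (Function.support F).Finite := by
  apply Set.Finite.subset (Set.Finite.preimage (he.injOn) hA)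
  intro k hk
  simp only [Set.mem_preimage, Function.mem_support]
  intro h0
  exact hk (hF k h0)

/-- Perfect reconstruction for the prediction-correction filters associated to an
interpolatory predictor `A`: `S_A D_{Atᵀ} + S_B D_{Btᵀ} = id`. -/
theorem pred_corr_perfect_reconstruction {m : ℕ}
    (A : ℤ → Matrix (Fin 2 × Fin m) (Fin 2 × Fin m) ℝ)
    (hA : (Function.support A).Finite)
    (hinterp : ∀ j : ℤ, A (2 * j) = if j = 0 then Dmat m else 0)
    (BtT : ℤ → Matrix (Fin 2 × Fin m) (Fin 2 × Fin m) ℝ)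
    (hBtT : ∀ k : ℤ, BtT k = ((-1 : ℝ) ^ (1 - k)) • (A (1 - k) * Dinv m)) :
    ∀ (c : ℤ → Fin 2 × Fin m → ℝ) (j : ℤ),
      subd A (decomp (fun i => (Amask' m i)ᵀ) c) j
        + subd (Bmask m) (decomp BtT c) j = c j := by
  intro c j
  -- Step 1 : the first decomposition is just `Dinv · c (2k)`
  have hdec : ∀ k : ℤ, decomp (fun i => (Amask' m i)ᵀ) c k = (Dinv m).mulVec (c (2 * k)) := by
    intro k
    unfold decomp
    rw [finsum_eq_single _ (2 * k)]
    · simp [Amask', Dinv_transpose]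
    · intro i hi
      have : i - 2 * k ≠ 0 := by omega
      simp [Amask', this]
  -- first term as a clean finsum
  have hT1 : subd A (decomp (fun i => (Amask' m i)ᵀ) c) j
      = ∑ᶠ k : ℤ, (A (j - 2 * k)).mulVec ((Dinv m).mulVec (c (2 * k))) := by
    unfold subd
    exact finsum_congr fun k => by rw [hdec k]
  rcases Int.even_or_odd j with ⟨n, hn⟩ | ⟨n, hn⟩
  · -- even case : j = 2n
    have hj : j = 2 * n := by omega
    subst hj
    have hT2 : subd (Bmask m) (decomp BtT c) (2 * n) = 0 := by
      unfold subd
      apply finsum_eq_zero_of_forall_eq_zero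
      intro k
      have : (2 * n - 2 * k : ℤ) ≠ 1 := by omega
      simp [Bmask, this]
    rw [hT1, hT2, add_zero]
    rw [finsum_eq_single _ n]
    · have h0 : A (2 * n - 2 * n) = Dmat m := by
        have := hinterp 0
        simpa using this
      rw [h0, mulVec_mulVec, Dmat_mul_Dinv, one_mulVec]
    · intro k hk
      have h2 : (2 * n - 2 * k : ℤ) = 2 * (n - k) := by ring
      have h3 : A (2 * (n - k)) = 0 := by
        rw [hinterp, if_neg (sub_ne_zero.mpr (Ne.symm hk))]
      rw [h2, h3, zero_mulVec]
  · -- odd case : j = 2n + 1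
    have hj : j = 2 * n + 1 := by omega
    subst hj
    -- the second subdivision picks out the term k = n
    have hT2 : subd (Bmask m) (decomp BtT c) (2 * n + 1) = decomp BtT c n := by
      unfold subd
      rw [finsum_eq_single _ n]
      · have : (2 * n + 1 - 2 * n : ℤ) = 1 := by ring
        simp [Bmask, this]
      · intro k hk
        have : (2 * n + 1 - 2 * k : ℤ) ≠ 1 := by omega
        simp [Bmask, this]
    -- rewrite the decomposition with the explicit filter
    set g : ℤ → Fin 2 × Fin m → ℝ := fun i =>
      ((-1 : ℝ) ^ (1 - (i - 2 * n))) • ((A (1 - (i - 2 * n)) * Dinv m).mulVec (c i)) with hg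
    have hdecB : decomp BtT c n = ∑ᶠ i : ℤ, g i := by
      unfold decomp
      apply finsum_congr
      intro i
      rw [hBtT, smul_mulVec]
    set ge : ℤ → Fin 2 × Fin m → ℝ := fun i => if Even i then g i else 0 with hge
    set go : ℤ → Fin 2 × Fin m → ℝ := fun i => if Even i then 0 else g i with hgo
    have hg0 : ∀ i, A (1 - (i - 2 * n)) = 0 → g i = 0 := by
      intro i h
      simp [hg, h]
    have einj : Function.Injective (fun i : ℤ => 1 - (i - 2 * n)) := by
      intro a b hab
      dsimp only at hab
      omega
    have hgfin : (Function.support g).Finite := supp_fin hA _ einj g hg0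
    have hgefin : (Function.support ge).Finite := by
      apply supp_fin hA _ einj
      intro i h
      simp [hge, hg0 i h]
    have hgofin : (Function.support go).Finite := by
      apply supp_fin hA _ einj
      intro i h
      simp [hgo, hg0 i h]
    have hsplit : (∑ᶠ i : ℤ, g i) = (∑ᶠ i : ℤ, ge i) + ∑ᶠ i : ℤ, go i := by
      rw [← finsum_add_distrib hgefin hgofin]
      apply finsum_congr
      intro i
      by_cases h : Even i <;> simp [hge, hgo, h]
    -- the odd part gives exactly c (2n+1)
    have hodd : (∑ᶠ i : ℤ, go i) = c (2 * n + 1) := by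
      rw [finsum_eq_single _ (2 * n + 1)]
      · have hnotev : ¬ Even (2 * n + 1) := by
          rw [Int.even_iff]; omega
        have h1 : (1 - (2 * n + 1 - 2 * n) : ℤ) = 0 := by ring
        have hA0 : A 0 = Dmat m := by
          have := hinterp 0
          simpa using this
        simp only [hgo, hnotev, if_false, hg, h1]
        rw [zpow_zero, one_smul, hA0, Dmat_mul_Dinv, one_mulVec]
      · intro i hi
        by_cases h : Even i
        · simp [hgo, h]
        · rw [Int.not_even_iff_odd] at h
          obtain ⟨k, hk⟩ := h
          have h2 : (1 - (i - 2 * n) : ℤ) = 2 * (n - k) := by omega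
          have h3 : A (1 - (i - 2 * n)) = 0 := by
            rw [h2, hinterp, if_neg]
            omega
          have hnev : ¬ Even i := by rw [Int.not_even_iff_odd]; exact ⟨k, hk⟩
          simp [hgo, hnev, hg, h3]
    -- the even part reindexed through i = 2k
    have heven : (∑ᶠ i : ℤ, ge i) = ∑ᶠ k : ℤ, g (2 * k) := by
      have dinj : Function.Injective (fun k : ℤ => 2 * k) := by
        intro a b hab; dsimp only at hab; omega
      rw [← finsum_mem_univ, finsum_mem_inter_support_eq' ge Set.univ
        (Set.range (fun k : ℤ => 2 * k)), finsum_mem_range dinj]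
      · apply finsum_congr
        intro k
        have : Even (2 * k : ℤ) := ⟨k, by ring⟩
        simp [hge, this]
      · intro x hx
        simp only [Set.mem_univ, true_iff, Set.mem_range]
        have hev : Even x := by
          by_contra h
          exact hx (by simp [hge, h])
        obtain ⟨k, hk⟩ := hev
        exact ⟨k, by omega⟩
    -- each even term is the negative of the corresponding first-sum term
    have hgval : ∀ k : ℤ, g (2 * k)
        = -((A (2 * n + 1 - 2 * k)).mulVec ((Dinv m).mulVec (c (2 * k)))) := by
      intro k
      have h1 : (1 - (2 * k - 2 * n) : ℤ) = 2 * n + 1 - 2 * k := by ring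
      have hodd' : Odd (2 * n + 1 - 2 * k : ℤ) := ⟨n - k, by ring⟩
      simp only [hg, h1]
      rw [hodd'.neg_one_zpow, neg_one_smul, ← mulVec_mulVec]
    -- put everything together
    rw [hT1, hT2, hdecB, hsplit, hodd, heven]
    have hfin1 : (Function.support
        (fun k : ℤ => (A (2 * n + 1 - 2 * k)).mulVec ((Dinv m).mulVec (c (2 * k))))).Finite := by
      apply supp_fin hA (fun k => 2 * n + 1 - 2 * k) (by intro a b hab; dsimp only at hab; omega)
      intro k h
      simp [h]
    have hfin2 : (Function.support (fun k : ℤ => g (2 * k))).Finite := by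
      apply supp_fin hA (fun k => 2 * n + 1 - 2 * k) (by intro a b hab; dsimp only at hab; omega)
      intro k h
      rw [hgval k, h]
      simp
    have hcancel : (∑ᶠ k : ℤ, (A (2 * n + 1 - 2 * k)).mulVec ((Dinv m).mulVec (c (2 * k))))
        + (∑ᶠ k : ℤ, g (2 * k)) = 0 := by
      rw [← finsum_add_distrib hfin1 hfin2]
      apply finsum_eq_zero_of_forall_eq_zero
      intro k
      rw [hgval k]
      simp
    calc (∑ᶠ k : ℤ, (A (2 * n + 1 - 2 * k)).mulVec ((Dinv m).mulVec (c (2 * k))))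
          + ((∑ᶠ k : ℤ, g (2 * k)) + c (2 * n + 1))
        = ((∑ᶠ k : ℤ, (A (2 * n + 1 - 2 * k)).mulVec ((Dinv m).mulVec (c (2 * k))))
          + (∑ᶠ k : ℤ, g (2 * k))) + c (2 * n + 1) := by ring
      _ = c (2 * n + 1) := by rw [hcancel, zero_add]
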